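/- Let a < b and c < d be real numbers, Δ = [a,b] × [c,d], and let f : Δ → ℝ be (L₁, L₂)-Lipschitz on Δ with L₁, L₂ > 0. For t, s ∈ (0,1], set n₁ = a·t + (1-t)·(a+b)/2, n₂ = b·t + (1-t)·(a+b)/2, m₁ = c·s + (1-s)·(c+d)/2, m₂ = d·s + (1-s)·(c+d)/2. Then |(f(n₁,m₁) + f(n₁,m₂) + f(n₂,m₁) + f(n₂,m₂))/4 − (1/((n₂-n₁)(m₂-m₁))) ∫_{n₁}^{n₂} ∫_{m₁}^{m₂} f(u,w) dw du| ≤ (1/12)·(4·L₁·(b-a)·t + 4·L₂·(d-c)·s), i.e., the left-hand side is at most (L₁·(b-a)·t + L₂·(d-c)·s)/3. -/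

import Mathlib

open MeasureTheory Set intervalIntegral

lemma trap_lemma (g : ℝ → ℝ) (α β L : ℝ) (hαβ : α < β) (hL : 0 ≤ L)
    (hg : ∀ x ∈ Icc α β, ∀ y ∈ Icc α β, |g x - g y| ≤ L * |x - y|) :
    |(g α + g β) / 2 * (β - α) - ∫ u in α..β, g u| ≤ L * (β - α)^2 / 4 := by
  have hlip : LipschitzOnWith (Real.toNNReal L) g (Icc α β) := by
    rw [lipschitzOnWith_iff_dist_le_mul]
    intro x hx y hy
    simpa [Real.dist_eq, Real.coe_toNNReal L hL] using hg x hx y hy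
  have hcont : ContinuousOn g (Icc α β) := hlip.continuousOn
  set μ : ℝ := (α + β) / 2 with hμ
  have hαμ : α ≤ μ := by simp [hμ]; linarith
  have hμβ : μ ≤ β := by simp [hμ]; linarith
  have hint : IntervalIntegrable g volume α β :=
    ContinuousOn.intervalIntegrable (by rw [uIcc_of_le hαβ.le]; exact hcont)
  have hint1 : IntervalIntegrable g volume α μ :=
    hint.mono_set (by rw [uIcc_of_le hαμ, uIcc_of_le hαβ.le]; exact Icc_subset_Icc le_rfl hμβ)
  have hint2 : IntervalIntegrable g volume μ β :=
    hint.mono_set (by rw [uIcc_of_le hμβ, uIcc_of_le hαβ.le]; exact Icc_subset_Icc hαμ le_rfl)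
  have hsplit : (∫ u in α..μ, g u) + ∫ u in μ..β, g u = ∫ u in α..β, g u :=
    integral_add_adjacent_intervals hint1 hint2
  have hαI : α ∈ Icc α β := ⟨le_rfl, hαβ.le⟩
  have hβI : β ∈ Icc α β := ⟨hαβ.le, le_rfl⟩
  -- bound part 1
  have habs1 : |∫ u in α..μ, (g α - g u)| ≤ L * (μ - α)^2 / 2 := by
    have h1 : |∫ u in α..μ, (g α - g u)| ≤ ∫ u in α..μ, |g α - g u| :=
      intervalIntegral.abs_integral_le_integral_abs hαμ
    have h2 : (∫ u in α..μ, |g α - g u|) ≤ ∫ u in α..μ, L * (u - α) := by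
      apply intervalIntegral.integral_mono_on hαμ
      · exact ((intervalIntegrable_const.sub hint1).abs)
      · exact (intervalIntegrable_id.sub intervalIntegrable_const).const_mul L
      · intro u hu
        have huI : u ∈ Icc α β := ⟨hu.1, hu.2.trans hμβ⟩
        have := hg α hαI u huI
        rw [abs_of_nonpos (by linarith [hu.1] : α - u ≤ 0)] at this
        linarith
    have h3 : (∫ u in α..μ, L * (u - α)) = L * (μ - α)^2 / 2 := by
      rw [intervalIntegral.integral_const_mul,
        intervalIntegral.integral_sub intervalIntegrable_id intervalIntegrable_const,
        integral_id, intervalIntegral.integral_const]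
      simp only [smul_eq_mul]
      ring
    linarith
  have habs2 : |∫ u in μ..β, (g β - g u)| ≤ L * (β - μ)^2 / 2 := by
    have h1 : |∫ u in μ..β, (g β - g u)| ≤ ∫ u in μ..β, |g β - g u| :=
      intervalIntegral.abs_integral_le_integral_abs hμβ
    have h2 : (∫ u in μ..β, |g β - g u|) ≤ ∫ u in μ..β, L * (β - u) := by
      apply intervalIntegral.integral_mono_on hμβ
      · exact ((intervalIntegrable_const.sub hint2).abs)
      · exact (intervalIntegrable_const.sub intervalIntegrable_id).const_mul L
      · intro u hu
        have huI : u ∈ Icc α β := ⟨hαμ.trans hu.1, hu.2⟩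
        have := hg β hβI u huI
        rw [abs_of_nonneg (by linarith [hu.2] : (0:ℝ) ≤ β - u)] at this
        linarith
    have h3 : (∫ u in μ..β, L * (β - u)) = L * (β - μ)^2 / 2 := by
      rw [intervalIntegral.integral_const_mul,
        intervalIntegral.integral_sub intervalIntegrable_const intervalIntegrable_id,
        integral_id, intervalIntegral.integral_const]
      simp only [smul_eq_mul]
      ring
    linarith
  -- identity
  have hid : (g α + g β) / 2 * (β - α) - (∫ u in α..β, g u)
      = (∫ u in α..μ, (g α - g u)) + ∫ u in μ..β, (g β - g u) := by
    rw [intervalIntegral.integral_sub intervalIntegrable_const hint1,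
        intervalIntegral.integral_sub intervalIntegrable_const hint2,
        intervalIntegral.integral_const, intervalIntegral.integral_const]
    have : (∫ u in α..μ, g u) + ∫ u in μ..β, g u = ∫ u in α..β, g u := hsplit
    simp only [smul_eq_mul]
    rw [← this]
    have hμα : μ - α = (β - α) / 2 := by rw [hμ]; ring
    have hβμ : β - μ = (β - α) / 2 := by rw [hμ]; ring
    rw [hμα, hβμ]; ring
  rw [hid]
  calc |(∫ u in α..μ, (g α - g u)) + ∫ u in μ..β, (g β - g u)|
      ≤ |∫ u in α..μ, (g α - g u)| + |∫ u in μ..β, (g β - g u)| := abs_add_le _ _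
    _ ≤ L * (μ - α)^2 / 2 + L * (β - μ)^2 / 2 := add_le_add habs1 habs2
    _ = L * (β - α)^2 / 4 := by
        have hμα : μ - α = (β - α) / 2 := by rw [hμ]; ring
        have hβμ : β - μ = (β - α) / 2 := by rw [hμ]; ring
        rw [hμα, hβμ]; ring


set_option maxHeartbeats 1600000 in
/-- Theorem 8, inequality (3.3) (with `M₁ = 4L₁`, `M₂ = 4L₂`, and
`n₂ - n₁ = t(b-a)`, `m₂ - m₁ = s(d-c)`): for an `(L₁, L₂)`-Lipschitz function
`f` on `[a,b] × [c,d]` and `t, s ∈ (0,1]`, with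
`n₁ = at+(1-t)(a+b)/2`, `n₂ = bt+(1-t)(a+b)/2`, `m₁ = cs+(1-s)(c+d)/2`,
`m₂ = ds+(1-s)(c+d)/2`, one has
`|(f(n₁,m₁)+f(n₁,m₂)+f(n₂,m₁)+f(n₂,m₂))/4
  − (1/((n₂-n₁)(m₂-m₁))) ∫_{n₁}^{n₂} ∫_{m₁}^{m₂} f(u,w) dw du|
  ≤ (1/12)(4L₁(b-a)t + 4L₂(d-c)s)`. -/
theorem hadamard_lipschitz_subrectangle
    (a b c d L₁ L₂ : ℝ) (hab : a < b) (hcd : c < d) (hL₁ : 0 < L₁) (hL₂ : 0 < L₂)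
    (f : ℝ → ℝ → ℝ)
    (hf : ∀ t₁ ∈ Icc a b, ∀ t₂ ∈ Icc a b, ∀ s₁ ∈ Icc c d, ∀ s₂ ∈ Icc c d,
      |f t₁ s₁ - f t₂ s₂| ≤ L₁ * |t₁ - t₂| + L₂ * |s₁ - s₂|)
    (t s : ℝ) (ht : t ∈ Ioc (0:ℝ) 1) (hs : s ∈ Ioc (0:ℝ) 1)
    (n₁ n₂ m₁ m₂ : ℝ)
    (hn₁ : n₁ = a * t + (1 - t) * ((a + b) / 2))
    (hn₂ : n₂ = b * t + (1 - t) * ((a + b) / 2))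
    (hm₁ : m₁ = c * s + (1 - s) * ((c + d) / 2))
    (hm₂ : m₂ = d * s + (1 - s) * ((c + d) / 2)) :
    |(f n₁ m₁ + f n₁ m₂ + f n₂ m₁ + f n₂ m₂) / 4 -
        (1 / ((n₂ - n₁) * (m₂ - m₁))) * ∫ u in n₁..n₂, ∫ w in m₁..m₂, f u w| ≤
      (1 / 12) * (4 * L₁ * (b - a) * t + 4 * L₂ * (d - c) * s) := by
  obtain ⟨ht0, ht1⟩ := ht
  obtain ⟨hs0, hs1⟩ := hs
  have hnn : n₂ - n₁ = (b - a) * t := by rw [hn₁, hn₂]; ring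
  have hmm : m₂ - m₁ = (d - c) * s := by rw [hm₁, hm₂]; ring
  have hn12 : n₁ < n₂ := by nlinarith
  have hm12 : m₁ < m₂ := by nlinarith
  have hsubn : Icc n₁ n₂ ⊆ Icc a b := by
    apply Icc_subset_Icc <;> [skip; skip] <;> nlinarith [hn₁, hn₂]
  have hsubm : Icc m₁ m₂ ⊆ Icc c d := by
    apply Icc_subset_Icc <;> [skip; skip] <;> nlinarith [hm₁, hm₂]
  have hn₁ab : n₁ ∈ Icc a b := hsubn ⟨le_rfl, hn12.le⟩
  have hn₂ab : n₂ ∈ Icc a b := hsubn ⟨hn12.le, le_rfl⟩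
  set G : ℝ → ℝ := fun u => ∫ w in m₁..m₂, f u w with hG
  -- trapezoid in w for u = n₁ and n₂
  have htrapw : ∀ u ∈ Icc a b,
      |(f u m₁ + f u m₂) / 2 * (m₂ - m₁) - G u| ≤ L₂ * (m₂ - m₁)^2 / 4 := by
    intro u hu
    apply trap_lemma (f u) m₁ m₂ L₂ hm12 hL₂.le
    intro x hx y hy
    have := hf u hu u hu x (hsubm hx) y (hsubm hy)
    simpa using this
  -- G is Lipschitz on Icc n₁ n₂
  have hGlip : ∀ x ∈ Icc n₁ n₂, ∀ y ∈ Icc n₁ n₂,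
      |G x - G y| ≤ (L₁ * (m₂ - m₁)) * |x - y| := by
    intro x hx y hy
    have hfi : ∀ u ∈ Icc a b, IntervalIntegrable (f u) volume m₁ m₂ := by
      intro u hu
      apply ContinuousOn.intervalIntegrable
      rw [uIcc_of_le hm12.le]
      have hlip : LipschitzOnWith (Real.toNNReal L₂) (f u) (Icc m₁ m₂) := by
        rw [lipschitzOnWith_iff_dist_le_mul]
        intro p hp q hq
        rw [Real.dist_eq, Real.dist_eq, Real.coe_toNNReal L₂ hL₂.le]
        have := hf u hu u hu p (hsubm hp) q (hsubm hq)
        simpa using this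
      exact hlip.continuousOn
    have hGxy : G x - G y = ∫ w in m₁..m₂, (f x w - f y w) :=
      (intervalIntegral.integral_sub (hfi x (hsubn hx)) (hfi y (hsubn hy))).symm
    rw [hGxy]
    have := intervalIntegral.norm_integral_le_of_norm_le_const
      (C := L₁ * |x - y|) (f := fun w => f x w - f y w) (a := m₁) (b := m₂) ?_
    · rw [Real.norm_eq_abs] at this
      calc |∫ w in m₁..m₂, (f x w - f y w)| ≤ L₁ * |x - y| * |m₂ - m₁| := this
        _ = (L₁ * (m₂ - m₁)) * |x - y| := by
            rw [abs_of_pos (by linarith : (0:ℝ) < m₂ - m₁)]; ring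
    · intro w hw
      rw [uIoc_of_le hm12.le] at hw
      have hwcd : w ∈ Icc c d := hsubm (Ioc_subset_Icc_self hw)
      have := hf x (hsubn hx) y (hsubn hy) w hwcd w hwcd
      simpa [Real.norm_eq_abs] using this
  -- trapezoid in u for G
  have htrapu : |(G n₁ + G n₂) / 2 * (n₂ - n₁) - ∫ u in n₁..n₂, G u|
      ≤ (L₁ * (m₂ - m₁)) * (n₂ - n₁)^2 / 4 :=
    trap_lemma G n₁ n₂ (L₁ * (m₂ - m₁)) hn12
      (mul_nonneg hL₁.le (by linarith)) hGlip
  have hE1 := htrapw n₁ hn₁ab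
  have hE2 := htrapw n₂ hn₂ab
  -- combine
  set X : ℝ := (f n₁ m₁ + f n₁ m₂ + f n₂ m₁ + f n₂ m₂) / 4 -
      (1 / ((n₂ - n₁) * (m₂ - m₁))) * ∫ u in n₁..n₂, ∫ w in m₁..m₂, f u w with hX
  have hIG : (∫ u in n₁..n₂, ∫ w in m₁..m₂, f u w) = ∫ u in n₁..n₂, G u := rfl
  have hkpos : (0:ℝ) < (n₂ - n₁) * (m₂ - m₁) := mul_pos (by linarith) (by linarith)
  have hidX : ((n₂ - n₁) * (m₂ - m₁)) * X =
      ((n₂ - n₁) / 2) * (((f n₁ m₁ + f n₁ m₂) / 2 * (m₂ - m₁) - G n₁)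
        + ((f n₂ m₁ + f n₂ m₂) / 2 * (m₂ - m₁) - G n₂))
      + ((G n₁ + G n₂) / 2 * (n₂ - n₁) - ∫ u in n₁..n₂, G u) := by
    rw [hX, hIG]
    rw [mul_sub, ← mul_assoc, mul_one_div_cancel hkpos.ne', one_mul]
    ring
  have hbound : |((n₂ - n₁) * (m₂ - m₁)) * X| ≤
      ((n₂ - n₁) * (m₂ - m₁)) * ((L₁ * (n₂ - n₁) + L₂ * (m₂ - m₁)) / 4) := by
    rw [hidX]
    calc |_| ≤ |(n₂ - n₁) / 2| * (|(f n₁ m₁ + f n₁ m₂) / 2 * (m₂ - m₁) - G n₁|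
          + |(f n₂ m₁ + f n₂ m₂) / 2 * (m₂ - m₁) - G n₂|)
        + |(G n₁ + G n₂) / 2 * (n₂ - n₁) - ∫ u in n₁..n₂, G u| := by
          refine (abs_add_le _ _).trans ?_
          gcongr
          rw [abs_mul]
          exact mul_le_mul_of_nonneg_left (abs_add_le _ _) (abs_nonneg _)
      _ ≤ ((n₂ - n₁) / 2) * (L₂ * (m₂ - m₁)^2 / 4 + L₂ * (m₂ - m₁)^2 / 4)
          + (L₁ * (m₂ - m₁)) * (n₂ - n₁)^2 / 4 := by
          rw [abs_of_pos (by linarith : (0:ℝ) < (n₂ - n₁) / 2)]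
          gcongr
      _ = ((n₂ - n₁) * (m₂ - m₁)) * ((L₁ * (n₂ - n₁) + L₂ * (m₂ - m₁)) / 4) := by ring
  have hXb : |X| ≤ (L₁ * (n₂ - n₁) + L₂ * (m₂ - m₁)) / 4 := by
    rw [abs_mul, abs_of_pos hkpos] at hbound
    exact le_of_mul_le_mul_left hbound hkpos
  have hfin : (L₁ * (n₂ - n₁) + L₂ * (m₂ - m₁)) / 4 ≤
      (1 / 12) * (4 * L₁ * (b - a) * t + 4 * L₂ * (d - c) * s) := by
    rw [hnn, hmm]
    nlinarith [mul_pos hL₁ (mul_pos (by linarith : (0:ℝ) < b - a) ht0),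
      mul_pos hL₂ (mul_pos (by linarith : (0:ℝ) < d - c) hs0)]
  linarith [hXb, hfin]
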